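/- Let M = (C, W, F) be an abelian model structure on an abelian category. Then a morphism f is a weak equivalence if and only if f factors as f = p ∘ i where i is a monomorphism with cokernel in W and p is an epimorphism with kernel in W. -/

import Mathlib

open CategoryTheory Limits

universe w v u

section Preamble

variable {A : Type u} [Category.{v} A] [Abelian A] [HasExt.{w} A]

/-- `Ext^n(X, Y) = 0`. -/
def extVanish (X Y : A) (n : ℕ) : Prop := Subsingleton (Abelian.Ext X Y n)

/-- The right `Ext¹`-orthogonal class. -/
def rightPerp (𝒳 : Set A) : Set A := {Y | ∀ X ∈ 𝒳, extVanish X Y 1}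

/-- The left `Ext¹`-orthogonal class. -/
def leftPerp (𝒴 : Set A) : Set A := {X | ∀ Y ∈ 𝒴, extVanish X Y 1}

/-- `(𝒳, 𝒴)` is a cotorsion pair. -/
def IsCotorsionPair (𝒳 𝒴 : Set A) : Prop := 𝒴 = rightPerp 𝒳 ∧ 𝒳 = leftPerp 𝒴

/-- `(𝒳, 𝒴)` is a complete cotorsion pair: it has enough injectives and enough
projectives. -/
def IsCompleteCP (𝒳 𝒴 : Set A) : Prop :=
  IsCotorsionPair 𝒳 𝒴 ∧
  (∀ M : A, ∃ S : ShortComplex A, S.ShortExact ∧ S.X₁ = M ∧ S.X₂ ∈ 𝒴 ∧ S.X₃ ∈ 𝒳) ∧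
  (∀ M : A, ∃ S : ShortComplex A, S.ShortExact ∧ S.X₁ ∈ 𝒴 ∧ S.X₂ ∈ 𝒳 ∧ S.X₃ = M)

/-- `(𝒳, 𝒴)` is a hereditary cotorsion pair: `Ext^i(X, Y) = 0` for all `i ≥ 1`. -/
def IsHereditaryCP (𝒳 𝒴 : Set A) : Prop :=
  IsCotorsionPair 𝒳 𝒴 ∧ ∀ n : ℕ, 1 ≤ n → ∀ X ∈ 𝒳, ∀ Y ∈ 𝒴, extVanish X Y n

/-- `X` is a retract of `Y`. -/
def IsRetractOf (X Y : A) : Prop := ∃ (i : X ⟶ Y) (r : Y ⟶ X), i ≫ r = 𝟙 X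

/-- A class is thick if it is closed under retracts and satisfies two out of three
on short exact sequences. -/
def IsThick (𝒲 : Set A) : Prop :=
  (∀ X Y : A, IsRetractOf X Y → Y ∈ 𝒲 → X ∈ 𝒲) ∧
  ∀ S : ShortComplex A, S.ShortExact →
    ((S.X₁ ∈ 𝒲 → S.X₂ ∈ 𝒲 → S.X₃ ∈ 𝒲) ∧ (S.X₁ ∈ 𝒲 → S.X₃ ∈ 𝒲 → S.X₂ ∈ 𝒲) ∧
      (S.X₂ ∈ 𝒲 → S.X₃ ∈ 𝒲 → S.X₁ ∈ 𝒲))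

/-- A Hovey triple `(𝒞, 𝒲, ℱ)`, i.e. an abelian model structure. -/
def IsHoveyTriple (𝒞 𝒲 ℱ : Set A) : Prop :=
  IsThick 𝒲 ∧ IsCompleteCP (𝒞 ∩ 𝒲) ℱ ∧ IsCompleteCP 𝒞 (𝒲 ∩ ℱ)

/-- A hereditary Hovey triple: both associated cotorsion pairs are hereditary. -/
def IsHereditaryHoveyTriple (𝒞 𝒲 ℱ : Set A) : Prop :=
  IsHoveyTriple 𝒞 𝒲 ℱ ∧ IsHereditaryCP (𝒞 ∩ 𝒲) ℱ ∧ IsHereditaryCP 𝒞 (𝒲 ∩ ℱ)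

end Preamble

namespace Statement11Aux

open CategoryTheory.Abelian
open scoped Pseudoelement

variable {A : Type u} [Category.{v} A] [Abelian A]

lemma cokerSeqExact {M N : A} (f : M ⟶ N) :
    (ShortComplex.mk f (cokernel.π f) (cokernel.condition f)).Exact :=
  ShortComplex.exact_of_g_is_cokernel _ (cokernelIsCokernel f)

lemma kerSeqExact {M N : A} (f : M ⟶ N) :
    (ShortComplex.mk (kernel.ι f) f (kernel.condition f)).Exact :=
  ShortComplex.exact_of_f_is_kernel _ (kernelIsKernel f)

lemma pseudoCoker {M N : A} (f : M ⟶ N) :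
    ∀ b : N, (cokernel.π f) b = 0 → ∃ a : M, f a = b :=
  Pseudoelement.pseudo_exact_of_exact (cokerSeqExact f)

lemma pseudoKer {M N : A} (f : M ⟶ N) :
    ∀ b : M, f b = 0 → ∃ a : (kernel f : A), (kernel.ι f) a = b :=
  Pseudoelement.pseudo_exact_of_exact (kerSeqExact f)

lemma pseudoZeroOfMono {P Q : A} (f : P ⟶ Q) [Mono f] {a : P} (h : f a = 0) : a = 0 :=
  Pseudoelement.pseudo_injective_of_mono f (by rwa [Pseudoelement.apply_zero])

/-- The "third isomorphism theorem" short exact sequence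
`0 → coker m → coker (m ≫ j) → coker j → 0` for composable monos. -/
@[reducible] noncomputable def thirdSC {X B P : A} (m : X ⟶ B) (j : B ⟶ P) : ShortComplex A :=
  ShortComplex.mk
    (cokernel.desc m (j ≫ cokernel.π (m ≫ j)) (by rw [← Category.assoc, cokernel.condition]))
    (cokernel.desc (m ≫ j) (cokernel.π j)
      (by rw [Category.assoc, cokernel.condition, comp_zero]))
    (by
      apply coequalizer.hom_ext
      simp)

lemma thirdSC_shortExact {X B P : A} (m : X ⟶ B) (j : B ⟶ P) [Mono m] [Mono j] :
    (thirdSC m j).ShortExact := by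
  haveI : Mono (m ≫ j) := mono_comp m j
  haveI hm : Mono (thirdSC m j).f := by
    apply Pseudoelement.mono_of_zero_of_map_zero
    intro a ha
    obtain ⟨b, hb⟩ := Pseudoelement.pseudo_surjective_of_epi (cokernel.π m) a
    have hcomm : j ≫ cokernel.π (m ≫ j) = cokernel.π m ≫ (thirdSC m j).f :=
      (cokernel.π_desc _ _ _).symm
    have h1 : (cokernel.π (m ≫ j)) (j b) = 0 := by
      rw [← Pseudoelement.comp_apply, hcomm, Pseudoelement.comp_apply, hb, ha]
    obtain ⟨x, hx⟩ := pseudoCoker (m ≫ j) _ h1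
    have h2 : j (m x) = j b := by rw [← Pseudoelement.comp_apply, hx]
    have h3 : m x = b := Pseudoelement.pseudo_injective_of_mono j h2
    rw [← hb, ← h3, ← Pseudoelement.comp_apply, cokernel.condition, Pseudoelement.zero_apply]
  haveI he : Epi (thirdSC m j).g :=
    epi_of_epi_fac (cokernel.π_desc (m ≫ j) (cokernel.π j) _)
  exact { exact := Pseudoelement.exact_of_pseudo_exact _ (by
      intro b hb
      obtain ⟨z, hz⟩ := Pseudoelement.pseudo_surjective_of_epi (cokernel.π (m ≫ j)) b
      have h1 : (cokernel.π j) z = 0 := by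
        have hc : cokernel.π (m ≫ j) ≫ (thirdSC m j).g = cokernel.π j := cokernel.π_desc _ _ _
        rw [← hc, Pseudoelement.comp_apply, hz, hb]
      obtain ⟨w, hw⟩ := pseudoCoker j _ h1
      refine ⟨(cokernel.π m) w, ?_⟩
      rw [← Pseudoelement.comp_apply]
      have hc2 : cokernel.π m ≫ (thirdSC m j).f = j ≫ cokernel.π (m ≫ j) := cokernel.π_desc _ _ _
      rw [hc2, Pseudoelement.comp_apply, hw, hz]) }

/-- The short exact sequence `0 → ker t → coker j → coker (j ≫ t) → 0`
for `j` mono, `t` epi, `j ≫ t` mono. -/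
@[reducible] noncomputable def kerCokerSC {X P Z : A} (j : X ⟶ P) (t : P ⟶ Z) : ShortComplex A :=
  ShortComplex.mk (kernel.ι t ≫ cokernel.π j)
    (cokernel.desc j (t ≫ cokernel.π (j ≫ t)) (by rw [← Category.assoc, cokernel.condition]))
    (by rw [Category.assoc, cokernel.π_desc, ← Category.assoc, kernel.condition, zero_comp])

lemma kerCokerSC_shortExact {X P Z : A} (j : X ⟶ P) (t : P ⟶ Z)
    [Mono j] [Epi t] [Mono (j ≫ t)] : (kerCokerSC j t).ShortExact := by
  haveI hm : Mono (kerCokerSC j t).f := by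
    apply Pseudoelement.mono_of_zero_of_map_zero
    intro a ha
    have ha' : (cokernel.π j) ((kernel.ι t) a) = 0 := by
      rw [← Pseudoelement.comp_apply]; exact ha
    obtain ⟨x, hx⟩ := pseudoCoker j _ ha'
    have h2 : (j ≫ t) x = 0 := by
      rw [Pseudoelement.comp_apply, hx, ← Pseudoelement.comp_apply, kernel.condition,
        Pseudoelement.zero_apply]
    have hx0 : x = 0 := pseudoZeroOfMono (j ≫ t) h2
    have h4 : (kernel.ι t) a = 0 := by rw [← hx, hx0, Pseudoelement.apply_zero]
    exact pseudoZeroOfMono (kernel.ι t) h4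
  haveI he : Epi (kerCokerSC j t).g := by
    have fac : cokernel.π j ≫ (kerCokerSC j t).g = t ≫ cokernel.π (j ≫ t) :=
      cokernel.π_desc _ _ _
    haveI : Epi (t ≫ cokernel.π (j ≫ t)) := epi_comp _ _
    exact epi_of_epi_fac fac
  exact { exact := Pseudoelement.exact_of_pseudo_exact _ (by
      intro b hb
      obtain ⟨z, hz⟩ := Pseudoelement.pseudo_surjective_of_epi (cokernel.π j) b
      have fac : cokernel.π j ≫ (kerCokerSC j t).g = t ≫ cokernel.π (j ≫ t) :=
        cokernel.π_desc _ _ _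
      have h1 : (cokernel.π (j ≫ t)) (t z) = 0 := by
        rw [← Pseudoelement.comp_apply, ← fac, Pseudoelement.comp_apply, hz, hb]
      obtain ⟨w, hw⟩ := pseudoCoker (j ≫ t) _ h1
      have heq : t z = t (j w) := by rw [← hw, Pseudoelement.comp_apply]
      obtain ⟨d, hd0, hd⟩ := Pseudoelement.sub_of_eq_image t z (j w) heq
      have hπ : (cokernel.π j) (j w) = 0 := by
        rw [← Pseudoelement.comp_apply, cokernel.condition, Pseudoelement.zero_apply]
      have hdz := hd _ (cokernel.π j) hπ
      obtain ⟨a, ha⟩ := pseudoKer t _ hd0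
      refine ⟨a, ?_⟩
      show Pseudoelement.pseudoApply (kernel.ι t ≫ cokernel.π j) a = b
      rw [Pseudoelement.comp_apply, ha, hdz, hz]) }

section PullbackKernels

variable {Zc Z₀ Yc : A} (p : Zc ⟶ Yc) (p₀ : Z₀ ⟶ Yc)

/-- A mono with a natural retraction-style factorization is a kernel. -/
noncomputable def isKernelOfMonoFac {W X Y : A} {f : X ⟶ Y} (κ : W ⟶ X) (hκ : Mono κ)
    (w : κ ≫ f = 0)
    (lift : ∀ {T : A} (g : T ⟶ X), g ≫ f = 0 → (T ⟶ W))
    (fac : ∀ {T : A} (g : T ⟶ X) (hg : g ≫ f = 0), lift g hg ≫ κ = g) :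
    IsLimit (KernelFork.ofι κ w) :=
  KernelFork.IsLimit.ofι κ w lift fac (fun {T} g hg m hm => by
    haveI := hκ
    rw [← cancel_mono κ, hm, fac])

/-- The canonical map `ker p₀ ⟶ pullback p p₀` is a kernel of `pullback.fst`. -/
noncomputable def kerFstIsLimit :
    IsLimit (KernelFork.ofι (pullback.lift (0 : kernel p₀ ⟶ Zc) (kernel.ι p₀) (by simp))
      (pullback.lift_fst _ _ _) : KernelFork (pullback.fst p p₀)) :=
  isKernelOfMonoFac _ (mono_of_mono_fac (pullback.lift_snd _ _ _)) _
    (fun {T} g hg => kernel.lift p₀ (g ≫ pullback.snd p p₀)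
      (by rw [Category.assoc, ← pullback.condition, ← Category.assoc, hg, zero_comp]))
    (fun {T} g hg => by
      apply pullback.hom_ext
      · simp [hg, pullback.lift_fst, pullback.lift_snd, pullback.lift_fst_assoc, pullback.lift_snd_assoc, kernel.lift_ι]
      · simp [pullback.lift_fst, pullback.lift_snd, pullback.lift_fst_assoc, pullback.lift_snd_assoc, kernel.lift_ι])

/-- The canonical map `ker p ⟶ pullback p p₀` is a kernel of `pullback.snd`. -/
noncomputable def kerSndIsLimit :
    IsLimit (KernelFork.ofι (pullback.lift (kernel.ι p) (0 : kernel p ⟶ Z₀) (by simp))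
      (pullback.lift_snd _ _ _) : KernelFork (pullback.snd p p₀)) :=
  isKernelOfMonoFac _ (mono_of_mono_fac (pullback.lift_fst _ _ _)) _
    (fun {T} g hg => kernel.lift p (g ≫ pullback.fst p p₀)
      (by rw [Category.assoc, pullback.condition, ← Category.assoc, hg, zero_comp]))
    (fun {T} g hg => by
      apply pullback.hom_ext
      · simp [pullback.lift_fst, pullback.lift_snd, pullback.lift_fst_assoc, pullback.lift_snd_assoc, kernel.lift_ι]
      · simp [hg, pullback.lift_fst, pullback.lift_snd, pullback.lift_fst_assoc, pullback.lift_snd_assoc, kernel.lift_ι])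

/-- `ker (pullback.fst p p₀) ≅ ker p₀`. -/
noncomputable def kerFstIso : kernel (pullback.fst p p₀) ≅ kernel p₀ :=
  IsLimit.conePointUniqueUpToIso (kernelIsKernel _) (kerFstIsLimit p p₀)

/-- `ker (pullback.snd p p₀) ≅ ker p`. -/
noncomputable def kerSndIso : kernel (pullback.snd p p₀) ≅ kernel p :=
  IsLimit.conePointUniqueUpToIso (kernelIsKernel _) (kerSndIsLimit p p₀)

end PullbackKernels

/-- `coker (pushout.inl k u) ≅ coker u`. -/
noncomputable def cokerInlIso {K B W' : A} (k : K ⟶ B) (u : K ⟶ W') :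
    cokernel (pushout.inl k u) ≅ cokernel u where
  hom := cokernel.desc _ (pushout.desc 0 (cokernel.π u)
      (by rw [comp_zero, cokernel.condition])) (by simp [pushout.inl_desc, pushout.inr_desc, pushout.inl_desc_assoc, pushout.inr_desc_assoc, cokernel.π_desc, cokernel.π_desc_assoc])
  inv := cokernel.desc u (pushout.inr k u ≫ cokernel.π _)
      (by rw [← Category.assoc, ← pushout.condition, Category.assoc, cokernel.condition,
        comp_zero])
  hom_inv_id := by
    apply coequalizer.hom_ext
    apply pushout.hom_ext
    · simp [← pushout.condition_assoc, pushout.inl_desc, pushout.inr_desc, pushout.inl_desc_assoc, pushout.inr_desc_assoc, cokernel.π_desc, cokernel.π_desc_assoc]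
    · simp [pushout.inl_desc, pushout.inr_desc, pushout.inl_desc_assoc, pushout.inr_desc_assoc, cokernel.π_desc, cokernel.π_desc_assoc]
  inv_hom_id := by
    apply coequalizer.hom_ext
    simp [pushout.inl_desc, pushout.inr_desc, pushout.inl_desc_assoc, pushout.inr_desc_assoc, cokernel.π_desc, cokernel.π_desc_assoc]

end Statement11Aux

namespace Statement11Aux

open CategoryTheory.Abelian

variable {A : Type u} [Category.{v} A] [Abelian A]

lemma thick_iso {𝒲 : Set A} (hT : IsThick 𝒲) {X Y : A} (e : X ≅ Y) (hY : Y ∈ 𝒲) : X ∈ 𝒲 :=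
  hT.1 X Y ⟨e.hom, e.inv, e.hom_inv_id⟩ hY

section ExtLemmas

variable [HasExt.{w} A]

lemma extVanish_iso_left {X X' Y : A} (e : X' ≅ X) {n : ℕ} (h : extVanish X Y n) :
    extVanish X' Y n := by
  show Subsingleton (Abelian.Ext X' Y n)
  constructor
  intro a b
  have key : ∀ c : Abelian.Ext X' Y n,
      c = (Ext.mk₀ e.hom).comp ((Ext.mk₀ e.inv).comp c (zero_add n)) (zero_add n) := by
    intro c
    rw [Ext.mk₀_comp_mk₀_assoc, Iso.hom_inv_id, Ext.mk₀_id_comp]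
  rw [key a, key b, @Subsingleton.elim _ h ((Ext.mk₀ e.inv).comp a (zero_add n))
    ((Ext.mk₀ e.inv).comp b (zero_add n))]

lemma extVanish_iso_right {X Y Y' : A} (e : Y ≅ Y') {n : ℕ} (h : extVanish X Y n) :
    extVanish X Y' n := by
  show Subsingleton (Abelian.Ext X Y' n)
  constructor
  intro a b
  have key : ∀ c : Abelian.Ext X Y' n,
      c = (c.comp (Ext.mk₀ e.inv) (add_zero n)).comp (Ext.mk₀ e.hom) (add_zero n) := by
    intro c
    rw [Ext.comp_assoc_of_third_deg_zero, Ext.mk₀_comp_mk₀, Iso.inv_hom_id, Ext.comp_mk₀_id]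
  rw [key a, key b, @Subsingleton.elim _ h (a.comp (Ext.mk₀ e.inv) (add_zero n))
    (b.comp (Ext.mk₀ e.inv) (add_zero n))]

lemma leftPerp_iso {𝒴 : Set A} {X X' : A} (e : X' ≅ X) (h : X ∈ leftPerp 𝒴) :
    X' ∈ leftPerp 𝒴 :=
  fun Y hY => extVanish_iso_left e (h Y hY)

lemma rightPerp_iso {𝒳 : Set A} {Y Y' : A} (e : Y ≅ Y') (h : Y ∈ rightPerp 𝒳) :
    Y' ∈ rightPerp 𝒳 :=
  fun X hX => extVanish_iso_right e (h X hX)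

lemma leftPerp_ext {𝒴 : Set A} {S : ShortComplex A} (hS : S.ShortExact)
    (h1 : S.X₁ ∈ leftPerp 𝒴) (h3 : S.X₃ ∈ leftPerp 𝒴) : S.X₂ ∈ leftPerp 𝒴 := by
  intro Y hY
  show Subsingleton (Abelian.Ext S.X₂ Y 1)
  constructor
  intro a b
  suffices key : ∀ c : Abelian.Ext S.X₂ Y 1, c = 0 by rw [key a, key b]
  intro c
  obtain ⟨x₁, hx₁⟩ := Ext.contravariant_sequence_exact₂ hS Y c
    (@Subsingleton.elim _ (h1 Y hY) _ 0)
  rw [← hx₁, @Subsingleton.elim _ (h3 Y hY) x₁ 0, Ext.comp_zero]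

/-- The factorization of an arbitrary morphism as a cofibration followed by a
trivial fibration, given a Hovey triple. -/
lemma factorization {𝒞 𝒲 ℱ : Set A} (h : IsHoveyTriple 𝒞 𝒲 ℱ) {X Y : A} (f : X ⟶ Y) :
    ∃ (Z₀ : A) (i₀ : X ⟶ Z₀) (p₀ : Z₀ ⟶ Y),
      f = i₀ ≫ p₀ ∧ Mono i₀ ∧ cokernel i₀ ∈ 𝒞 ∧ Epi p₀ ∧ kernel p₀ ∈ 𝒲 ∩ ℱ := by
  obtain ⟨hT, hcp1, hcp2⟩ := h
  obtain ⟨S₁, hS₁, hW1, hC1, hY1⟩ := hcp2.2.2 Y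
  subst hY1
  haveI := hS₁.epi_g
  set e : X ⊞ S₁.X₂ ⟶ S₁.X₃ := biprod.desc f S₁.g with he
  haveI : Epi e := epi_of_epi_fac (biprod.inr_desc f S₁.g)
  obtain ⟨S₂, hS₂, hK2, hW2, hC2⟩ := hcp2.2.1 (kernel e)
  haveI := hS₂.mono_f
  set k : kernel e ⟶ X ⊞ S₁.X₂ := kernel.ι e with hk
  set u : kernel e ⟶ S₂.X₂ := eqToHom hK2.symm ≫ S₂.f with hu
  haveI : Mono u := mono_comp _ _
  haveI : Mono (biprod.inl : X ⟶ X ⊞ S₁.X₂) := mono_of_mono_fac biprod.inl_fst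
  set p₀ : pushout k u ⟶ S₁.X₃ := pushout.desc e 0 (by rw [hk, kernel.condition, comp_zero])
    with hp₀def
  have hinl : pushout.inl k u ≫ p₀ = e := pushout.inl_desc _ _ _
  have hinr : pushout.inr k u ≫ p₀ = 0 := pushout.inr_desc _ _ _
  haveI : Epi p₀ := epi_of_epi_fac hinl
  have hfac : f = (biprod.inl ≫ pushout.inl k u) ≫ p₀ := by
    rw [Category.assoc, hinl, he, biprod.inl_desc]
  -- the kernel of `p₀` is isomorphic to `S₂.X₂`
  have cond : k ≫ (pushout.inl k u ≫ cokernel.π (pushout.inr k u)) = 0 := by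
    rw [← Category.assoc, pushout.condition, Category.assoc, cokernel.condition, comp_zero]
  have hcolim := Abelian.epiIsCokernelOfKernel _ (kernelIsKernel e)
  obtain ⟨ι'', hι''⟩ := CokernelCofork.IsColimit.desc' hcolim
    (pushout.inl k u ≫ cokernel.π (pushout.inr k u)) cond
  simp only [Cofork.π_ofπ] at hι''
  set ι' : cokernel (pushout.inr k u) ⟶ S₁.X₃ := cokernel.desc _ p₀ hinr with hι'def
  have hii1 : ι'' ≫ ι' = 𝟙 S₁.X₃ := by
    rw [← cancel_epi e, ← Category.assoc, hι'', Category.assoc, hι'def, cokernel.π_desc,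
      hinl]
    exact (Category.comp_id e).symm
  have hp₀ι'' : p₀ ≫ ι'' = cokernel.π (pushout.inr k u) := by
    apply pushout.hom_ext
    · rw [← Category.assoc, hinl, hι'']
    · rw [← Category.assoc, hinr, zero_comp, cokernel.condition]
  have hii2 : ι' ≫ ι'' = 𝟙 _ := by
    rw [← cancel_epi (cokernel.π (pushout.inr k u)), ← Category.assoc, hι'def,
      cokernel.π_desc, hp₀ι'', Category.comp_id]
  haveI : IsIso ι' := ⟨ι'', hii2, hii1⟩
  have klim0 := Abelian.monoIsKernelOfCokernel _ (cokernelIsCokernel (pushout.inr k u))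
  have hp₀eq : p₀ = cokernel.π (pushout.inr k u) ≫ ι' := (cokernel.π_desc _ _ _).symm
  have klim := isKernelCompMono klim0 ι' hp₀eq
  have isoK : (kernel p₀ : A) ≅ S₂.X₂ :=
    IsLimit.conePointUniqueUpToIso (kernelIsKernel p₀) klim
  have hker : kernel p₀ ∈ 𝒲 ∩ ℱ := by
    constructor
    · exact thick_iso hT isoK hW2.1
    · have hF : ℱ = rightPerp (𝒞 ∩ 𝒲) := hcp1.1.1
      have h2 := hW2.2
      rw [hF] at h2 ⊢
      exact rightPerp_iso isoK.symm h2
  -- the cokernel of `i₀` lies in `𝒞`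
  have h𝒞 : 𝒞 = leftPerp (𝒲 ∩ ℱ) := hcp2.1.2
  have SE := thirdSC_shortExact (biprod.inl : X ⟶ X ⊞ S₁.X₂) (pushout.inl k u)
  have h1 : (thirdSC (biprod.inl : X ⟶ X ⊞ S₁.X₂) (pushout.inl k u)).X₁ ∈
      leftPerp (𝒲 ∩ ℱ) := by
    apply leftPerp_iso (cokernelBiprodInlIso (X := X) (Y := S₁.X₂))
    rw [← h𝒞]; exact hC1
  have h3 : (thirdSC (biprod.inl : X ⟶ X ⊞ S₁.X₂) (pushout.inl k u)).X₃ ∈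
      leftPerp (𝒲 ∩ ℱ) := by
    have e3 : cokernel (pushout.inl k u) ≅ S₂.X₃ :=
      (cokerInlIso k u) ≪≫ (cokernelIsoOfEq hu) ≪≫ (cokernelEpiComp (eqToHom hK2.symm) S₂.f)
        ≪≫ (IsColimit.coconePointUniqueUpToIso (cokernelIsCokernel S₂.f) hS₂.gIsCokernel)
    apply leftPerp_iso e3
    rw [← h𝒞]; exact hC2
  have hcoker : cokernel (biprod.inl ≫ pushout.inl k u) ∈ 𝒞 := by
    rw [h𝒞]
    exact leftPerp_ext SE h1 h3
  exact ⟨pushout k u, biprod.inl ≫ pushout.inl k u, p₀, hfac, mono_comp _ _, hcoker,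
    inferInstance, hker⟩

end ExtLemmas

lemma stepB {𝒲 : Set A} (hT : IsThick 𝒲) {X Y Z Z₀ : A} (i : X ⟶ Z) (p : Z ⟶ Y)
    (i₀ : X ⟶ Z₀) (p₀ : Z₀ ⟶ Y) [Mono i] [Mono i₀] [Epi p] [Epi p₀]
    (hf : i ≫ p = i₀ ≫ p₀) (hci : cokernel i ∈ 𝒲) (hkp : kernel p ∈ 𝒲)
    (hkp₀ : kernel p₀ ∈ 𝒲) : cokernel i₀ ∈ 𝒲 := by
  haveI hj : Mono (pullback.lift i i₀ hf) := mono_of_mono_fac (pullback.lift_fst i i₀ hf)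
  haveI h1 : Mono (pullback.lift i i₀ hf ≫ pullback.fst p p₀) := by
    rw [pullback.lift_fst]; infer_instance
  haveI h2 : Mono (pullback.lift i i₀ hf ≫ pullback.snd p p₀) := by
    rw [pullback.lift_snd]; infer_instance
  have SEa := kerCokerSC_shortExact (pullback.lift i i₀ hf) (pullback.fst p p₀)
  have SEb := kerCokerSC_shortExact (pullback.lift i i₀ hf) (pullback.snd p p₀)
  have ha1 : kernel (pullback.fst p p₀) ∈ 𝒲 := thick_iso hT (kerFstIso p p₀) hkp₀
  have hb1 : kernel (pullback.snd p p₀) ∈ 𝒲 := thick_iso hT (kerSndIso p p₀) hkp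
  have hca : cokernel (pullback.lift i i₀ hf ≫ pullback.fst p p₀) ∈ 𝒲 := by
    rw [pullback.lift_fst]; exact hci
  have hmid : cokernel (pullback.lift i i₀ hf) ∈ 𝒲 := (hT.2 _ SEa).2.1 ha1 hca
  have hfin : cokernel (pullback.lift i i₀ hf ≫ pullback.snd p p₀) ∈ 𝒲 :=
    (hT.2 _ SEb).1 hb1 hmid
  rwa [pullback.lift_snd] at hfin

end Statement11Aux

theorem statement11 {A : Type u} [Category.{v} A] [Abelian A] [HasExt.{w} A]
    (𝒞 𝒲 ℱ : Set A) (h : IsHoveyTriple 𝒞 𝒲 ℱ) {X Y : A} (f : X ⟶ Y) :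
    (∃ (Z : A) (i : X ⟶ Z) (p : Z ⟶ Y), f = i ≫ p ∧ Mono i ∧ cokernel i ∈ 𝒞 ∩ 𝒲 ∧
      Epi p ∧ kernel p ∈ 𝒲 ∩ ℱ) ↔
    (∃ (Z : A) (i : X ⟶ Z) (p : Z ⟶ Y), f = i ≫ p ∧ Mono i ∧ cokernel i ∈ 𝒲 ∧
      Epi p ∧ kernel p ∈ 𝒲) := by
  constructor
  · rintro ⟨Z, i, p, hf, hi, hc, hp, hk⟩
    exact ⟨Z, i, p, hf, hi, hc.2, hp, hk.1⟩
  · rintro ⟨Z, i, p, hf, hi, hc, hp, hk⟩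
    obtain ⟨Z₀, i₀, p₀, hf₀, hi₀, hc₀, hp₀, hk₀⟩ := Statement11Aux.factorization h f
    haveI := hi; haveI := hi₀; haveI := hp; haveI := hp₀
    have hcomm : i ≫ p = i₀ ≫ p₀ := by rw [← hf, ← hf₀]
    have hW : cokernel i₀ ∈ 𝒲 :=
      Statement11Aux.stepB h.1 i p i₀ p₀ hcomm hc hk hk₀.1
    exact ⟨Z₀, i₀, p₀, hf₀, hi₀, ⟨hc₀, hW⟩, hp₀, hk₀⟩
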